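/- (Ando–Lin style decomposition lemma) Let G be a graph with m edges, A_G its adjacency matrix, μ₁ ≥ μ₂ its two largest eigenvalues with orthonormal eigenvectors v₁, v₂, and let r > 1. If ∑_{ij ∈ E(G)} (μ₁ v₁(i)v₁(j) + μ₂ v₂(i)v₂(j))² ≤ ((r−1)/r) ∑_{i,j ∈ V(G)} (μ₁ v₁(i)v₁(j) + μ₂ v₂(i)v₂(j))², then μ₁² + μ₂² ≤ (2(r−1)/r)·m. -/
import Mathlib


open Matrix Finset SimpleGraph

variable {V : Type*} [Fintype V] [DecidableEq V]

set_option linter.unusedSectionVars false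

lemma adjH (G : SimpleGraph V) [DecidableRel G.Adj] : (G.adjMatrix ℝ).IsHermitian := by
  unfold Matrix.IsHermitian
  rw [conjTranspose_eq_transpose_of_trivial]
  exact G.transpose_adjMatrix

/-- `graphEig G k` : the (k+1)-st largest eigenvalue (with multiplicity) of the adjacency
matrix of `G`. -/
noncomputable def graphEig (G : SimpleGraph V) [DecidableRel G.Adj] (k : ℕ) : ℝ :=
  ((Finset.univ.val.map (adjH G).eigenvalues).sort (· ≥ ·)).getD k 0

theorem ando_lin_decomposition (G : SimpleGraph V) [DecidableRel G.Adj]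
    (v₁ v₂ : V → ℝ) (r : ℝ) (hr : 1 < r)
    (h1 : G.adjMatrix ℝ *ᵥ v₁ = graphEig G 0 • v₁)
    (h2 : G.adjMatrix ℝ *ᵥ v₂ = graphEig G 1 • v₂)
    (hn1 : v₁ ⬝ᵥ v₁ = 1) (hn2 : v₂ ⬝ᵥ v₂ = 1) (ho : v₁ ⬝ᵥ v₂ = 0)
    (h : ∑ i, ∑ j,
        (if G.Adj i j then (graphEig G 0 * v₁ i * v₁ j + graphEig G 1 * v₂ i * v₂ j) ^ 2 else 0)
      ≤ (r - 1) / r * ∑ i, ∑ j,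
          (graphEig G 0 * v₁ i * v₁ j + graphEig G 1 * v₂ i * v₂ j) ^ 2) :
    (graphEig G 0) ^ 2 + (graphEig G 1) ^ 2 ≤ 2 * (r - 1) / r * G.edgeFinset.card := by
  set μ₁ := graphEig G 0 with hμ₁
  set μ₂ := graphEig G 1 with hμ₂
  set B : V → V → ℝ := fun i j => μ₁ * v₁ i * v₁ j + μ₂ * v₂ i * v₂ j with hB
  set S : ℝ := μ₁ ^ 2 + μ₂ ^ 2 with hS
  simp only [dotProduct] at hn1 hn2 ho
  have hr0 : (0:ℝ) < r := lt_trans one_pos hr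
  have hr1 : (0:ℝ) < r - 1 := by linarith
  -- total sum of B² is S
  have htot : ∑ i, ∑ j, (B i j) ^ 2 = S := by
    have hi : ∀ i : V, ∑ j, (B i j) ^ 2
        = μ₁ ^ 2 * (v₁ i * v₁ i) + μ₂ ^ 2 * (v₂ i * v₂ i) := by
      intro i
      have : ∀ j : V, (B i j) ^ 2 =
          (μ₁ ^ 2 * (v₁ i * v₁ i)) * (v₁ j * v₁ j)
            + (2 * μ₁ * μ₂ * (v₁ i * v₂ i)) * (v₁ j * v₂ j)
            + (μ₂ ^ 2 * (v₂ i * v₂ i)) * (v₂ j * v₂ j) := fun j => by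
        simp only [hB]; ring
      simp only [this, Finset.sum_add_distrib, ← Finset.mul_sum]
      rw [hn1, hn2, ho]; ring
    simp only [hi, Finset.sum_add_distrib, ← Finset.mul_sum]
    rw [hn1, hn2]; simp [hS]
  -- eigen equations pointwise
  have e1 : ∀ i, ∑ j, (if G.Adj i j then v₁ j else 0) = μ₁ * v₁ i := by
    intro i
    have := congrFun h1 i
    simpa [mulVec, dotProduct, SimpleGraph.adjMatrix_apply, ite_mul, one_mul, zero_mul]
      using this
  have e2 : ∀ i, ∑ j, (if G.Adj i j then v₂ j else 0) = μ₂ * v₂ i := by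
    intro i
    have := congrFun h2 i
    simpa [mulVec, dotProduct, SimpleGraph.adjMatrix_apply, ite_mul, one_mul, zero_mul]
      using this
  -- sum over edges of B is S
  have hedge : ∑ i, ∑ j, (if G.Adj i j then B i j else 0) = S := by
    have : ∀ i j : V, (if G.Adj i j then B i j else 0) =
        (μ₁ * v₁ i) * (if G.Adj i j then v₁ j else 0)
          + (μ₂ * v₂ i) * (if G.Adj i j then v₂ j else 0) := by
      intro i j; by_cases hij : G.Adj i j <;> simp [hij, hB]
    simp only [this, Finset.sum_add_distrib, ← Finset.mul_sum, e1, e2]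
    have : ∑ i, (μ₁ * v₁ i * (μ₁ * v₁ i)) + ∑ i, (μ₂ * v₂ i * (μ₂ * v₂ i))
        = μ₁ ^ 2 * ∑ i, v₁ i * v₁ i + μ₂ ^ 2 * ∑ i, v₂ i * v₂ i := by
      rw [Finset.mul_sum, Finset.mul_sum]
      congr 1 <;> exact Finset.sum_congr rfl fun i _ => by ring
    rw [this, hn1, hn2, hS]; ring
  -- number of ordered adjacent pairs is 2m
  have hcount : ∑ i, ∑ j, (if G.Adj i j then (1:ℝ) else 0)
      = 2 * (G.edgeFinset.card : ℝ) := by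
    have : ∀ i : V, ∑ j, (if G.Adj i j then (1:ℝ) else 0) = (G.degree i : ℝ) := by
      intro i
      rw [Finset.sum_boole, SimpleGraph.degree, SimpleGraph.neighborFinset_eq_filter]
    simp only [this]
    rw [← Nat.cast_sum, G.sum_degrees_eq_twice_card_edges]
    push_cast; ring
  -- Cauchy-Schwarz
  have hCS : S ^ 2 ≤ (2 * (G.edgeFinset.card : ℝ)) *
      ∑ i, ∑ j, (if G.Adj i j then (B i j) ^ 2 else 0) := by
    have := Finset.sum_mul_sq_le_sq_mul_sq (Finset.univ : Finset (V × V))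
      (fun p => if G.Adj p.1 p.2 then (1:ℝ) else 0)
      (fun p => if G.Adj p.1 p.2 then B p.1 p.2 else 0)
    have l1 : ∑ p : V × V, ((if G.Adj p.1 p.2 then (1:ℝ) else 0) *
        (if G.Adj p.1 p.2 then B p.1 p.2 else 0)) = S := by
      rw [← hedge, ← Finset.sum_product']
      exact Finset.sum_congr rfl fun p _ => by by_cases hp : G.Adj p.1 p.2 <;> simp [hp]
    have l2 : ∑ p : V × V, (if G.Adj p.1 p.2 then (1:ℝ) else 0) ^ 2
        = 2 * (G.edgeFinset.card : ℝ) := by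
      rw [← hcount, ← Finset.sum_product']
      exact Finset.sum_congr rfl fun p _ => by by_cases hp : G.Adj p.1 p.2 <;> simp [hp]
    have l3 : ∑ p : V × V, (if G.Adj p.1 p.2 then B p.1 p.2 else 0) ^ 2
        = ∑ i, ∑ j, (if G.Adj i j then (B i j) ^ 2 else 0) := by
      rw [← Finset.sum_product']
      exact Finset.sum_congr rfl fun p _ => by by_cases hp : G.Adj p.1 p.2 <;> simp [hp]
    rw [l1, l2, l3] at this
    exact this
  have hmain : S ^ 2 ≤ (2 * (r - 1) / r * (G.edgeFinset.card : ℝ)) * S := by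
    calc S ^ 2 ≤ (2 * (G.edgeFinset.card : ℝ)) *
        ∑ i, ∑ j, (if G.Adj i j then (B i j) ^ 2 else 0) := hCS
      _ ≤ (2 * (G.edgeFinset.card : ℝ)) * ((r - 1) / r * S) := by
          apply mul_le_mul_of_nonneg_left _ (by positivity)
          rw [← htot]; exact h
      _ = (2 * (r - 1) / r * (G.edgeFinset.card : ℝ)) * S := by ring
  have hS0 : 0 ≤ S := by positivity
  rcases eq_or_lt_of_le hS0 with hz | hpos
  · rw [← hz]
    positivity
  · nlinarith [hmain, hpos]
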